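/- arXiv:2205.10831 — 3 statements merged into one kernel-verified Lean document; each statement's English description precedes it below -/
import Mathlib

section
/- Let U be a regular t-structure on a triangulated category T. Then gl.dim(U^b) = gl.dim(U), where U^b is the restriction of U to a bounded t-structure on the full triangulated subcategory U_ℕ of T. -/
open CategoryTheory Category Limits Pretriangulated Triangulated

namespace TStructurePaper

variable {C : Type*} [Category C] [Preadditive C] [HasZeroObject C]
  [HasShift C ℤ] [∀ (n : ℤ), (shiftFunctor C n).Additive] [Pretriangulated C]

/-- A t-structure is non-degenerate if every object of `⋂ₙ U_{≤n}` and every object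
of `⋂ₙ U_{≥n}` is a zero object. -/
def IsNondegenerate (t : TStructure C) : Prop :=
  (∀ X : C, (∀ n : ℤ, t.le n X) → IsZero X) ∧
  (∀ X : C, (∀ n : ℤ, t.ge n X) → IsZero X)

/-- A t-structure is stable if `Σ U_{≤0} = U_{≤0}`. -/
def IsStable (t : TStructure C) : Prop :=
  ∀ X : C, t.le 0 X ↔ t.le 0 (X⟦(1 : ℤ)⟧)

/-- A t-structure is hereditary if `Hom(U_{≥0}, U_{≤-2}) = 0`. -/
def IsHereditary (t : TStructure C) : Prop :=
  ∀ ⦃X Y : C⦄, t.ge 0 X → t.le (-2) Y → ∀ f : X ⟶ Y, f = 0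

/-- `f` factors through some object satisfying the predicate `P`. -/
def FactorsThrough (P : C → Prop) {X Y : C} (f : X ⟶ Y) : Prop :=
  ∃ (Z : C) (_ : P Z) (u : X ⟶ Z) (v : Z ⟶ Y), f = u ≫ v

/-- A t-structure is regular if any morphism `f : X → Y` with `Y ∈ U_{≤m}` for some `m`
which factors through an object of `U_{≥n}` for every `n` vanishes, and dually. -/
def IsRegular (t : TStructure C) : Prop :=
  (∀ ⦃X Y : C⦄, (∃ m : ℤ, t.le m Y) → ∀ f : X ⟶ Y,
      (∀ n : ℤ, FactorsThrough (t.ge n) f) → f = 0) ∧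
  (∀ ⦃X Y : C⦄, (∃ m : ℤ, t.ge m X) → ∀ f : X ⟶ Y,
      (∀ n : ℤ, FactorsThrough (t.le n) f) → f = 0)

/-- `Hom(U_{≥0}, U_{≤-(d+1)}) = 0`. -/
def HasGlDimAtMost (t : TStructure C) (d : ℕ) : Prop :=
  ∀ ⦃X Y : C⦄, t.ge 0 X → t.le (-(d + 1)) Y → ∀ f : X ⟶ Y, f = 0

/-- The global dimension of a t-structure, as an element of `ℕ∞`. -/
noncomputable def glDim (t : TStructure C) : ℕ∞ :=
  sInf {e : ℕ∞ | ∃ d : ℕ, e = d ∧ HasGlDimAtMost t d}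

/-- `d(U,V) ≤ d`, i.e. `V_{≤m} ⊆ U_{≤0} ⊆ V_{≤m+d}` for some integer `m`. -/
def DistAtMost (u v : TStructure C) (d : ℕ) : Prop :=
  ∃ m : ℤ, (∀ X : C, v.le m X → u.le 0 X) ∧ (∀ X : C, u.le 0 X → v.le (m + d) X)

/-- The distance between two t-structures, as an element of `ℕ∞`. -/
noncomputable def dist (u v : TStructure C) : ℕ∞ :=
  sInf {e : ℕ∞ | ∃ d : ℕ, e = d ∧ DistAtMost u v d}

/-- Membership of the subcategory `U_ℕ = ⋃_{n ≥ 0} U_{[-n, n]}`. -/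
def InUN (t : TStructure C) (X : C) : Prop :=
  ∃ n : ℕ, t.ge (-(n : ℤ)) X ∧ t.le (n : ℤ) X

/-- A t-structure is bounded if `⋃ₙ U_{≤n} = T = ⋃ₙ U_{≥n}`. -/
def IsBounded (t : TStructure C) : Prop :=
  (∀ X : C, ∃ n : ℤ, t.le n X) ∧ (∀ X : C, ∃ n : ℤ, t.ge n X)

/-- Membership of the heart `U₀ = U_{≤0} ∩ U_{≥0}`. -/
def InHeart (t : TStructure C) (X : C) : Prop :=
  t.le 0 X ∧ t.ge 0 X

/-- Truncation data for a t-structure: functors `τ_{≤n}` right adjoint to the inclusions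
`U_{≤n} ↪ T` (with counit `ι`) and functors `τ_{≥n}` left adjoint to the inclusions
`U_{≥n} ↪ T` (with unit `π`). -/
structure TruncData (t : TStructure C) where
  τle (n : ℤ) : C ⥤ C
  τge (n : ℤ) : C ⥤ C
  ι (n : ℤ) : τle n ⟶ 𝟭 C
  π (n : ℤ) : 𝟭 C ⟶ τge n
  le_mem (n : ℤ) (X : C) : t.le n ((τle n).obj X)
  ge_mem (n : ℤ) (X : C) : t.ge n ((τge n).obj X)
  le_adj (n : ℤ) (A X : C) (hA : t.le n A) :
    Function.Bijective (fun g : A ⟶ (τle n).obj X => g ≫ (ι n).app X)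
  ge_adj (n : ℤ) (X B : C) (hB : t.ge n B) :
    Function.Bijective (fun g : (τge n).obj X ⟶ B => (π n).app X ≫ g)

/-- The cohomological functor `Hⁿ = Σⁿ ∘ τ_{≤n} ∘ τ_{≥n}` associated to a t-structure. -/
def TruncData.H {t : TStructure C} (d : TruncData t) (n : ℤ) : C ⥤ C :=
  d.τge n ⋙ d.τle n ⋙ shiftFunctor C n


/-- `Hom(U^b_{≥0}, U^b_{≤-(d+1)}) = 0` computed in the full subcategory `U_ℕ`. -/
def HasGlDimAtMostB (t : TStructure C) (d : ℕ) : Prop :=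
  ∀ ⦃X Y : C⦄, InUN t X → InUN t Y → t.ge 0 X → t.le (-(d + 1)) Y → ∀ f : X ⟶ Y, f = 0

/-- The global dimension of the restricted bounded t-structure `U^b` on `U_ℕ`
(the Hom-groups in the full subcategory `U_ℕ` being those of `T`). -/
noncomputable def glDimB (t : TStructure C) : ℕ∞ :=
  sInf {e : ℕ∞ | ∃ d : ℕ, e = d ∧ HasGlDimAtMostB t d}


section Aux

variable (t : TStructure C)

lemma zero_of_le_lt_ge {a b : ℤ} (hab : a < b) {X Y : C}
    (hX : t.le a X) (hY : t.ge b Y) (f : X ⟶ Y) : f = 0 := by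
  have hX' : t.le 0 (X⟦a⟧) := t.le_shift a a 0 (by omega) X hX
  have hY' : t.ge 1 (Y⟦a⟧) := t.ge_antitone (show (1:ℤ) ≤ b - a by omega) _
    (t.ge_shift b a (b - a) (by omega) Y hY)
  have h0 := t.zero' ((shiftFunctor C a).map f) hX' hY'
  exact (shiftFunctor C a).map_injective (by rw [h0, Functor.map_zero])

lemma le_of_orthogonal (n : ℤ) (X : C)
    (h : ∀ (B : C), t.ge (n + 1) B → ∀ f : X ⟶ B, f = 0) : t.le n X := by
  obtain ⟨A, B, hA, hB, f, g, w, hT⟩ := t.exists_triangle X n (n + 1) rfl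
  have hg : g = 0 := h B hB g
  have hZB : IsZero B := by
    rw [IsZero.iff_id_eq_zero]
    obtain ⟨j, hj⟩ := Triangle.yoneda_exact₃ _ hT (𝟙 B) (by simp [hg]; exact zero_comp)
    have hj0 : j = 0 := zero_of_le_lt_ge t (show n - 1 < n + 1 by omega)
      (t.le_shift n 1 (n - 1) (by omega) A hA) hB j
    rw [hj, hj0]; exact comp_zero
  have hiso : IsIso ((Triangle.mk f g w).mor₁) := (Triangle.isZero₃_iff_isIso₁ _ hT).1 hZB
  exact (t.le n).prop_of_iso (@asIso _ _ _ _ f hiso) hA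

lemma ge_of_orthogonal (n : ℤ) (X : C)
    (h : ∀ (A : C), t.le (n - 1) A → ∀ f : A ⟶ X, f = 0) : t.ge n X := by
  obtain ⟨A, B, hA, hB, f, g, w, hT⟩ := t.exists_triangle X (n - 1) n (by omega)
  have hf : f = 0 := h A hA f
  have hT' := inv_rot_of_distTriang _ hT
  have hZA : IsZero A := by
    rw [IsZero.iff_id_eq_zero]
    obtain ⟨j, hj⟩ := Triangle.coyoneda_exact₂ _ hT' (𝟙 A) (by simp [hf]; exact comp_zero)
    have hj0 : j = 0 := zero_of_le_lt_ge t (show n - 1 < n + 1 by omega) hA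
      (t.ge_shift n (-1) (n + 1) (by omega) B hB) j
    rw [hj, hj0]; exact zero_comp
  have hiso : IsIso ((Triangle.mk f g w).mor₂) := (Triangle.isZero₁_iff_isIso₂ _ hT).1 hZA
  exact (t.ge n).prop_of_iso (@asIso _ _ _ _ g hiso).symm hB

lemma ge_ext (n : ℤ) (T : Triangle C) (hT : T ∈ distTriang C)
    (h₁ : t.ge n T.obj₁) (h₃ : t.ge n T.obj₃) : t.ge n T.obj₂ := by
  refine ge_of_orthogonal t n _ (fun A hA φ => ?_)
  have h2 : φ ≫ T.mor₂ = 0 := zero_of_le_lt_ge t (show n - 1 < n by omega) hA h₃ _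
  obtain ⟨ψ, hψ⟩ := Triangle.coyoneda_exact₂ _ hT φ h2
  rw [hψ, zero_of_le_lt_ge t (show n - 1 < n by omega) hA h₁ ψ, zero_comp]

lemma le_ext (n : ℤ) (T : Triangle C) (hT : T ∈ distTriang C)
    (h₁ : t.le n T.obj₁) (h₃ : t.le n T.obj₃) : t.le n T.obj₂ := by
  refine le_of_orthogonal t n _ (fun B hB φ => ?_)
  have h2 : T.mor₁ ≫ φ = 0 := zero_of_le_lt_ge t (show n < n + 1 by omega) h₁ hB _
  obtain ⟨ψ, hψ⟩ := Triangle.yoneda_exact₂ _ hT φ h2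
  rw [hψ, zero_of_le_lt_ge t (show n < n + 1 by omega) h₃ hB ψ, comp_zero]

lemma hasGlDimAtMost_of_B (h : IsRegular t) {d : ℕ}
    (hd : HasGlDimAtMostB t d) : HasGlDimAtMost t d := by
  intro X Y hX hY f
  refine h.1 ⟨-(d + 1), hY⟩ f (fun n => ?_)
  by_cases hn : n ≤ 0
  · exact ⟨X, t.ge_antitone hn X hX, 𝟙 X, f, (id_comp f).symm⟩
  · push_neg at hn
    obtain ⟨A, B, hA, hB, u, v, w, hT⟩ := t.exists_triangle X (n - 1) n (by omega)
    have hT' := inv_rot_of_distTriang _ hT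
    have hA0 : t.ge 0 A :=
      ge_ext t 0 _ hT'
        (t.ge_antitone (by omega) _ (t.ge_shift n (-1) (n + 1) (by omega) B hB)) hX
    have hAUN : InUN t A :=
      ⟨n.toNat, t.ge_antitone (by omega) A hA0, t.le_monotone (by omega) A hA⟩
    have hg : u ≫ f = 0 := by
      refine h.2 ⟨0, hA0⟩ (u ≫ f) (fun k => ?_)
      by_cases hk : -(d + 1 : ℤ) ≤ k
      · exact ⟨Y, t.le_monotone hk Y hY, u ≫ f, 𝟙 Y, (comp_id _).symm⟩
      · push_neg at hk
        obtain ⟨Y₁, Y₂, hY₁, hY₂, u', v', w', hT2⟩ := t.exists_triangle Y k (k + 1) rfl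
        have hT2' := rot_of_distTriang _ hT2
        have hY₂le : t.le (-(d + 1)) Y₂ :=
          le_ext t _ _ hT2' hY
            (t.le_monotone (by omega) _ (t.le_shift k 1 (k - 1) (by omega) Y₁ hY₁))
        have hY₂UN : InUN t Y₂ :=
          ⟨(-(k + 1)).toNat, t.ge_antitone (by omega) Y₂ hY₂,
            t.le_monotone (by omega) Y₂ hY₂le⟩
        have hc : (u ≫ f) ≫ v' = 0 := hd hAUN hY₂UN hA0 hY₂le _
        obtain ⟨s, hs⟩ := Triangle.coyoneda_exact₂ _ hT2 (u ≫ f) hc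
        exact ⟨Y₁, hY₁, s, u', hs⟩
    obtain ⟨r, hr⟩ := Triangle.yoneda_exact₂ _ hT f hg
    exact ⟨B, hB, v, r, hr⟩

end Aux

/-- For a regular t-structure `U`, `gl.dim(U^b) = gl.dim(U)`. -/
theorem statement7 (t : TStructure C) (h : IsRegular t) : glDimB t = glDim t := by
  unfold glDimB glDim
  congr 1
  ext e
  simp only [Set.mem_setOf_eq]
  constructor
  · rintro ⟨d, rfl, hd⟩
    exact ⟨d, rfl, hasGlDimAtMost_of_B t h hd⟩
  · rintro ⟨d, rfl, hd⟩
    exact ⟨d, rfl, fun X Y _ _ hX hY f => hd hX hY f⟩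

end TStructurePaper
end

section
/- Let U, V, W be t-structures on a triangulated category T. Then: (1) d(U, V) = d(V, U); (2) d(U, V) = 0 if and only if V = Σᵐ(U) for some integer m, i.e. V_{≤0} = U_{≤m} and V_{≥0} = U_{≥m}; (3) d(U, W) ≤ d(U, V) + d(V, W). -/
open CategoryTheory Category Limits Pretriangulated Triangulated

namespace TStructurePaper

variable {C : Type*} [Category C] [Preadditive C] [HasZeroObject C]
  [HasShift C ℤ] [∀ (n : ℤ), (shiftFunctor C n).Additive] [Pretriangulated C]

section Aux

lemma le_shift_iff (t : TStructure C) (a n n' : ℤ) (h : a + n = n') (X : C) :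
    t.le n' X ↔ t.le n (X⟦a⟧) := by
  rw [← t.shift_le a n n' h]
  rfl

lemma ge_shift_iff (t : TStructure C) (a n n' : ℤ) (h : a + n = n') (X : C) :
    t.ge n' X ↔ t.ge n (X⟦a⟧) := by
  rw [← t.shift_ge a n n' h]
  rfl

lemma hom_zero (t : TStructure C) {a b : ℤ} (h : a < b) {X Y : C}
    (hX : t.le a X) (hY : t.ge b Y) (f : X ⟶ Y) : f = 0 := by
  have hX' : t.le 0 (X⟦a⟧) := (le_shift_iff t a 0 a (add_zero a) X).1 hX
  have hY' : t.ge (b - a) (Y⟦a⟧) := (ge_shift_iff t a (b - a) b (by omega) Y).1 hY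
  have hY'' : t.ge 1 (Y⟦a⟧) := t.ge_antitone (by omega : (1 : ℤ) ≤ b - a) _ hY'
  have hz := t.zero' ((shiftFunctor C a).map f) hX' hY''
  exact (shiftFunctor C a).map_injective (by rw [hz, Functor.map_zero])

lemma ge_iff_orth (t : TStructure C) (n : ℤ) (X : C) :
    t.ge n X ↔ ∀ ⦃Y : C⦄, t.le (n - 1) Y → ∀ f : Y ⟶ X, f = 0 := by
  constructor
  · exact fun hX Y hY f => hom_zero t (by omega) hY hX f
  · intro h
    obtain ⟨A, B, hA, hB, f, g, τ, mem⟩ := t.exists_triangle X (n - 1) n (by omega)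
    have hf : f = 0 := h hA f
    obtain ⟨ψ, hψ⟩ := Triangle.coyoneda_exact₂ _ (inv_rot_of_distTriang _ mem) (𝟙 A)
      (by exact (id_comp f).trans hf)
    have hB' : t.ge (n + 1) (B⟦(-1 : ℤ)⟧) :=
      (ge_shift_iff t (-1) (n + 1) n (by omega) B).1 hB
    have hψ0 : ψ = 0 := hom_zero t (by omega : n - 1 < n + 1) hA hB' ψ
    have hAzero : IsZero A := by
      rw [IsZero.iff_id_eq_zero, hψ, hψ0, zero_comp]
      rfl
    have : IsIso g := (Triangle.isZero₁_iff_isIso₂ _ mem).1 hAzero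
    exact (t.ge n).prop_of_iso (asIso g).symm hB

lemma le_subset_shift (u v : TStructure C) {a b : ℤ}
    (h : ∀ X : C, u.le a X → v.le b X) {a' b' : ℤ} (hk : a' - a = b' - b) :
    ∀ X : C, u.le a' X → v.le b' X := by
  intro X hX
  rw [le_shift_iff u (a' - a) a a' (by omega)] at hX
  rw [le_shift_iff v (a' - a) b b' (by omega)]
  exact h _ hX

lemma distAtMost_mono (u v : TStructure C) {d d' : ℕ} (h : d ≤ d') :
    DistAtMost u v d → DistAtMost u v d' := by
  rintro ⟨m, h1, h2⟩
  exact ⟨m, h1, fun X hX => v.le_monotone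
    (by exact_mod_cast add_le_add_right (Int.ofNat_le.2 h) m) _ (h2 X hX)⟩

lemma distAtMost_symm (u v : TStructure C) (d : ℕ) :
    DistAtMost u v d → DistAtMost v u d := by
  rintro ⟨m, h1, h2⟩
  refine ⟨-(m + d), ?_, ?_⟩
  · exact le_subset_shift u v h2 (by ring)
  · have := le_subset_shift v u h1 (a' := 0) (b' := -(m + d) + d) (by ring)
    exact this

lemma distAtMost_trans (u v w : TStructure C) (d₁ d₂ : ℕ)
    (h : DistAtMost u v d₁) (h' : DistAtMost v w d₂) : DistAtMost u w (d₁ + d₂) := by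
  obtain ⟨m₁, h1, h2⟩ := h
  obtain ⟨m₂, k1, k2⟩ := h'
  refine ⟨m₁ + m₂, ?_, ?_⟩
  · intro X hX
    exact h1 X (le_subset_shift w v k1 (a' := m₁ + m₂) (b' := m₁) (by ring) X hX)
  · intro X hX
    have := le_subset_shift v w k2 (a' := m₁ + (d₁ : ℤ))
      (b' := m₁ + m₂ + ((d₁ : ℕ) + (d₂ : ℕ) : ℕ)) (by push_cast; ring) X (h2 X hX)
    exact this

lemma dist_le_iff (u v : TStructure C) (d : ℕ) :
    dist u v ≤ (d : ℕ∞) ↔ DistAtMost u v d := by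
  constructor
  · intro h
    rw [dist] at h
    have hne : {e : ℕ∞ | ∃ d : ℕ, e = d ∧ DistAtMost u v d}.Nonempty := by
      by_contra hS
      rw [Set.not_nonempty_iff_eq_empty] at hS
      rw [hS, sInf_empty, top_le_iff] at h
      exact ENat.coe_ne_top d h
    obtain ⟨d', hd', hdam⟩ := csInf_mem hne
    rw [hd'] at h
    exact distAtMost_mono u v (by exact_mod_cast h) hdam
  · intro h
    exact sInf_le ⟨d, rfl, h⟩

end Aux

/-- For t-structures `U`, `V`, `W`: (1) `d(U,V) = d(V,U)`;
(2) `d(U,V) = 0` iff `V = Σᵐ(U)` for some integer `m`; (3) the triangle inequality. -/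
theorem statement11 (u v w : TStructure C) :
    dist u v = dist v u ∧
    (dist u v = 0 ↔
      ∃ m : ℤ, (∀ X : C, v.le 0 X ↔ u.le m X) ∧ (∀ X : C, v.ge 0 X ↔ u.ge m X)) ∧
    dist u w ≤ dist u v + dist v w := by
  refine ⟨?_, ⟨?_, ?_⟩, ?_⟩
  · have hset : {e : ℕ∞ | ∃ d : ℕ, e = d ∧ DistAtMost u v d} =
        {e : ℕ∞ | ∃ d : ℕ, e = d ∧ DistAtMost v u d} := by
      ext e
      constructor <;> rintro ⟨d, rfl, h⟩ <;> exact ⟨d, rfl, distAtMost_symm _ _ _ h⟩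
    rw [dist, dist, hset]
  · intro h
    have h0 : DistAtMost u v 0 := (dist_le_iff u v 0).1 (by simp [h])
    obtain ⟨m, h1, h2⟩ := h0
    have hL : ∀ Y : C, v.le (-1) Y → u.le (-m - 1) Y :=
      le_subset_shift v u h1 (by ring)
    have hL' : ∀ Y : C, u.le (-m - 1) Y → v.le (-1) Y :=
      le_subset_shift u v h2 (by push_cast; ring)
    refine ⟨-m, fun X => ⟨?_, ?_⟩, fun X => ⟨?_, ?_⟩⟩
    · exact fun hX => le_subset_shift v u h1 (a' := 0) (b' := -m) (by ring) X hX
    · exact fun hX => le_subset_shift u v h2 (a' := -m) (b' := 0) (by push_cast; ring) X hX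
    · intro hX
      have hv := (ge_iff_orth v 0 X).1 hX
      rw [show (0 : ℤ) - 1 = -1 by ring] at hv
      rw [ge_iff_orth u (-m) X]
      intro Y hY f
      exact hv (hL' Y hY) f
    · intro hX
      have hu := (ge_iff_orth u (-m) X).1 hX
      rw [ge_iff_orth v 0 X]
      rw [show (0 : ℤ) - 1 = -1 by ring]
      intro Y hY f
      exact hu (hL Y hY) f
  · rintro ⟨m, hLE, _⟩
    have h1 : ∀ X : C, v.le (-m) X → u.le 0 X :=
      le_subset_shift v u (fun X => (hLE X).1) (by ring)
    have h2 : ∀ X : C, u.le 0 X → v.le (-m + ((0 : ℕ) : ℤ)) X :=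
      le_subset_shift u v (fun X => (hLE X).2) (by push_cast; ring)
    have := (dist_le_iff u v 0).2 ⟨-m, h1, h2⟩
    simpa using this
  · rcases eq_or_ne (dist u v) ⊤ with h1 | h1
    · rw [h1, top_add]; exact le_top
    rcases eq_or_ne (dist v w) ⊤ with h2 | h2
    · rw [h2, add_top]; exact le_top
    obtain ⟨d₁, hd₁⟩ := WithTop.ne_top_iff_exists.1 h1
    obtain ⟨d₂, hd₂⟩ := WithTop.ne_top_iff_exists.1 h2
    have D1 : DistAtMost u v d₁ := (dist_le_iff u v d₁).1 (le_of_eq hd₁.symm)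
    have D2 : DistAtMost v w d₂ := (dist_le_iff v w d₂).1 (le_of_eq hd₂.symm)
    have h3 := (dist_le_iff u w (d₁ + d₂)).2 (distAtMost_trans u v w d₁ d₂ D1 D2)
    calc dist u w ≤ ((d₁ + d₂ : ℕ) : ℕ∞) := h3
      _ = dist u v + dist v w := by rw [← hd₁, ← hd₂]; push_cast; rfl

end TStructurePaper
end

section
/- Let U and V be two t-structures on a triangulated category T with d(U, V) < +∞. If U or V is stable, then U = V, i.e. U_{≤0} = V_{≤0} and U_{≥0} = V_{≥0}. -/
open CategoryTheory Category Limits Pretriangulated Triangulated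

namespace TStructurePaper

variable {C : Type*} [Category C] [Preadditive C] [HasZeroObject C]
  [HasShift C ℤ] [∀ (n : ℤ), (shiftFunctor C n).Additive] [Pretriangulated C]

lemma aux_le_shift_iff (t : TStructure C) (n a n' : ℤ) (h : a + n = n') (X : C) :
    t.le n (X⟦a⟧) ↔ t.le n' X := by
  conv_rhs => rw [← t.shift_le a n n' h]
  rfl

lemma aux_zero_of_le_of_ge (t : TStructure C) {a b : ℤ} (hab : a < b) {Y X : C}
    (hY : t.le a Y) (hX : t.ge b X) (f : Y ⟶ X) : f = 0 := by
  have hY' : t.le 0 (Y⟦a⟧) := t.le_shift a a 0 (by omega) Y hY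
  have hX' : t.ge (b - a) (X⟦a⟧) := t.ge_shift b a (b - a) (by omega) X hX
  have hX'' : t.ge 1 (X⟦a⟧) := t.ge_antitone (by omega) _ hX'
  apply (shiftFunctor C a).map_injective
  rw [Functor.map_zero]
  exact t.zero' _ hY' hX''

lemma aux_stable_le_shift {u : TStructure C} (hs : IsStable u) (k : ℤ) (X : C) :
    u.le 0 (X⟦k⟧) ↔ u.le 0 X := by
  induction k using Int.induction_on with
  | zero => exact (u.le 0).prop_iff_of_iso ((shiftFunctorZero C ℤ).app X)
  | succ k ih =>
      refine Iff.trans ((u.le 0).prop_iff_of_iso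
        ((shiftFunctorAdd' C (k : ℤ) 1 ((k : ℤ) + 1) rfl).app X)) (Iff.trans ?_ ih)
      exact (hs (X⟦(k : ℤ)⟧)).symm
  | pred k ih =>
      refine Iff.trans (hs (X⟦(-(k : ℤ) - 1)⟧)) (Iff.trans ?_ ih)
      exact ((u.le 0).prop_iff_of_iso
        ((shiftFunctorAdd' C (-(k : ℤ) - 1) 1 (-(k : ℤ)) (by ring)).app X)).symm

lemma aux_stable_le {u : TStructure C} (hs : IsStable u) (n : ℤ) (X : C) :
    u.le n X ↔ u.le 0 X :=
  (aux_le_shift_iff u 0 n n (by omega) X).symm.trans (aux_stable_le_shift hs n X)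

lemma aux_le_eq {u v : TStructure C} {d : ℕ} (hd : DistAtMost u v d)
    (hs : IsStable u ∨ IsStable v) (X : C) : u.le 0 X ↔ v.le 0 X := by
  obtain ⟨m, h1, h2⟩ := hd
  rcases hs with hs | hs
  · constructor
    · intro hX
      have hY : u.le 0 (X⟦-(m + (d : ℤ))⟧) := (aux_stable_le_shift hs _ X).2 hX
      exact (aux_le_shift_iff v (m + (d : ℤ)) (-(m + (d : ℤ))) 0 (by omega) X).1 (h2 _ hY)
    · intro hX
      have hY : v.le m (X⟦-m⟧) := (aux_le_shift_iff v m (-m) 0 (by omega) X).2 hX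
      exact (aux_stable_le_shift hs (-m) X).1 (h1 _ hY)
  · constructor
    · intro hX
      exact (aux_stable_le hs (m + (d : ℤ)) X).1 (h2 X hX)
    · intro hX
      exact h1 X ((aux_stable_le hs m X).2 hX)

lemma aux_ge_of_le_eq {u v : TStructure C} (hle : ∀ (n : ℤ) (X : C), u.le n X ↔ v.le n X)
    {X : C} (hX : u.ge 0 X) : v.ge 0 X := by
  obtain ⟨A, B, hA, hB, f, g, h, mem⟩ := v.exists_triangle X (-1) 0 (by omega)
  have hf : f = 0 := aux_zero_of_le_of_ge u (show (-1 : ℤ) < 0 by omega)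
    ((hle _ _).2 hA) hX f
  have mem' := rot_of_distTriang _ mem
  obtain ⟨s, hsec⟩ := Triangle.coyoneda_exact₃ _ mem' (𝟙 (A⟦(1 : ℤ)⟧)) (by
    change 𝟙 (A⟦(1 : ℤ)⟧) ≫ (-(shiftFunctor C (1 : ℤ)).map f) = 0
    rw [hf, Functor.map_zero, neg_zero, comp_zero])
  have hs0 : s = 0 := aux_zero_of_le_of_ge v (show (-2 : ℤ) < 0 by omega)
    (v.le_shift (-1) 1 (-2) (by omega) A hA) hB s
  have hzA : IsZero (A⟦(1 : ℤ)⟧) := by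
    rw [IsZero.iff_id_eq_zero, hsec, hs0, zero_comp]
    rfl
  have hh : h = 0 := hzA.eq_zero_of_tgt h
  have : IsIso g := by
    refine (Triangle.isZero₁_iff_isIso₂ _ mem).1 ?_
    rw [Triangle.isZero₁_iff _ mem]
    exact ⟨hf, hh⟩
  exact ((v.ge 0).prop_iff_of_iso (asIso g)).2 hB

/-- If `d(U,V) < +∞` and `U` or `V` is stable, then `U = V`, i.e.
`U_{≤0} = V_{≤0}` and `U_{≥0} = V_{≥0}`. -/
theorem statement16 (u v : TStructure C) (h : dist u v < ⊤)
    (hs : IsStable u ∨ IsStable v) :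
    (∀ X : C, u.le 0 X ↔ v.le 0 X) ∧ (∀ X : C, u.ge 0 X ↔ v.ge 0 X) := by
  obtain ⟨e, ⟨d, rfl, hdm⟩, -⟩ := sInf_lt_iff.1 h
  have hle : ∀ X : C, u.le 0 X ↔ v.le 0 X := aux_le_eq hdm hs
  have hle' : ∀ (n : ℤ) (X : C), u.le n X ↔ v.le n X := fun n X =>
    ((aux_le_shift_iff u 0 n n (by omega) X).symm.trans (hle _)).trans
      (aux_le_shift_iff v 0 n n (by omega) X)
  exact ⟨hle, fun X => ⟨fun hX => aux_ge_of_le_eq hle' hX,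
    fun hX => aux_ge_of_le_eq (fun n X => (hle' n X).symm) hX⟩⟩

end TStructurePaper
end
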